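/- Let H1 and H2 be two σ-MAGs with the same node set V. If H1 and H2 are m-Markov equivalent, then they satisfy Condition 1: (1) they have the same adjacencies; (2) they have the same unshielded colliders; (3) whenever a path π is a discriminating path for a node v in H1 and the corresponding path π' (with the same node sequence) in H2 is also a discriminating path for v, then v is a collider on π if and only if v is a collider on π'. -/

import Mathlib

/-- An edge mark: tail or arrowhead. -/
inductive Mark : Type
  | tail : Mark
  | arrow : Mark
  deriving DecidableEq

/-- A mixed graph, with directed edges (`dir a b` means `a → b`), bidirected edges and
undirected edges. -/
structure MixedGraph (V : Type*) where
  dir : V → V → Prop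
  bidir : V → V → Prop
  undir : V → V → Prop
  bidir_symm : ∀ a b, bidir a b → bidir b a
  undir_symm : ∀ a b, undir a b → undir b a

variable {V : Type*}

/-- There is an edge between `x` and `y` carrying mark `m₁` at `x` and mark `m₂` at `y`. -/
def MixedGraph.EdgeMk (G : MixedGraph V) (x y : V) : Mark → Mark → Prop
  | Mark.tail, Mark.arrow => G.dir x y
  | Mark.arrow, Mark.tail => G.dir y x
  | Mark.arrow, Mark.arrow => G.bidir x y
  | Mark.tail, Mark.tail => G.undir x y

theorem MixedGraph.edgeMk_symm {G : MixedGraph V} {x y : V} {m₁ m₂ : Mark}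
    (h : G.EdgeMk x y m₁ m₂) : G.EdgeMk y x m₂ m₁ := by
  cases m₁ <;> cases m₂ <;>
    first
      | exact h
      | exact G.bidir_symm _ _ h
      | exact G.undir_symm _ _ h

/-- `x` and `y` are adjacent: some edge joins them. -/
def MixedGraph.Adj (G : MixedGraph V) (x y : V) : Prop :=
  G.dir x y ∨ G.dir y x ∨ G.bidir x y ∨ G.undir x y

/-- There is an edge between `a` and `b` with an arrowhead at `a` (i.e. `a ←∗ b`). -/
def MixedGraph.ArrowAt (G : MixedGraph V) (a b : V) : Prop :=
  G.dir b a ∨ G.bidir a b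

/-- There is an edge between `a` and `b` with a tail at `a` (i.e. `a —∗ b`). -/
def MixedGraph.TailAt (G : MixedGraph V) (a b : V) : Prop :=
  G.dir a b ∨ G.undir a b

/-- A walk of length `n`: vertices `vert 0, …, vert n`; the `i`-th edge joins `vert i`
and `vert (i+1)`, carrying mark `mk1 i` at `vert i` and mark `mk2 i` at `vert (i+1)`. -/
structure MixedGraph.Walk (G : MixedGraph V) (n : ℕ) where
  vert : ℕ → V
  mk1 : ℕ → Mark
  mk2 : ℕ → Mark
  valid : ∀ i < n, G.EdgeMk (vert i) (vert (i + 1)) (mk1 i) (mk2 i)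

/-- A walk is a path if its vertices are pairwise distinct. -/
def MixedGraph.Walk.IsPath {G : MixedGraph V} {n : ℕ} (w : G.Walk n) : Prop :=
  ∀ i j, i ≤ n → j ≤ n → w.vert i = w.vert j → i = j

/-- Position `k` is a collider on the walk: both incident edges have an arrowhead
at `vert k`. -/
def MixedGraph.Walk.IsCollider {G : MixedGraph V} {n : ℕ} (w : G.Walk n) (k : ℕ) : Prop :=
  0 < k ∧ k < n ∧ w.mk2 (k - 1) = Mark.arrow ∧ w.mk1 k = Mark.arrow

/-- `a` is an ancestor of `b`: there is a directed walk from `a` to `b`. -/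
def MixedGraph.Anc (G : MixedGraph V) (a b : V) : Prop :=
  Relation.ReflTransGen G.dir a b

/-- `a` is an ancestor of some element of `A`. -/
def MixedGraph.AncS (G : MixedGraph V) (a : V) (A : Set V) : Prop :=
  ∃ b ∈ A, G.Anc a b

/-- `b` lies in the strongly connected component of `a`. -/
def MixedGraph.Sc (G : MixedGraph V) (a b : V) : Prop :=
  G.Anc a b ∧ G.Anc b a

/-- There is an anterior path from `a` to `b`: a path all of whose edges have a tail
mark at the endpoint nearer `a`. -/
def MixedGraph.AnteriorPath (G : MixedGraph V) (a b : V) : Prop :=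
  ∃ (n : ℕ) (w : G.Walk n), w.IsPath ∧ w.vert 0 = a ∧ w.vert n = b ∧
    ∀ i < n, w.mk1 i = Mark.tail

/-- The walk is inducing: every non-endpoint node is a collider that is an ancestor
of one of the endpoints. -/
def MixedGraph.Walk.IsInducing {G : MixedGraph V} {n : ℕ} (w : G.Walk n) : Prop :=
  ∀ k, 0 < k → k < n →
    w.IsCollider k ∧ (G.Anc (w.vert k) (w.vert 0) ∨ G.Anc (w.vert k) (w.vert n))

/-- There is an inducing path between `a` and `b`. -/
def MixedGraph.InducingPath (G : MixedGraph V) (a b : V) : Prop :=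
  ∃ (n : ℕ) (w : G.Walk n), w.IsPath ∧ w.vert 0 = a ∧ w.vert n = b ∧ w.IsInducing

/-- There is an inducing walk between `a` and `b`. -/
def MixedGraph.InducingWalk (G : MixedGraph V) (a b : V) : Prop :=
  ∃ (n : ℕ) (w : G.Walk n), w.vert 0 = a ∧ w.vert n = b ∧ w.IsInducing

/-- The neighborhood of `a` (its undirected-edge neighbors) is complete. -/
def MixedGraph.CompleteNbh (G : MixedGraph V) (a : V) : Prop :=
  ∀ b c, G.undir a b → G.undir a c → b ≠ c → G.undir b c

/-- A σ-maximal ancestral graph (σ-MAG). -/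
structure MixedGraph.IsSigmaMAG (G : MixedGraph V) : Prop where
  /-- no self-loops -/
  no_self : ∀ a : V, ¬ G.dir a a ∧ ¬ G.bidir a a ∧ ¬ G.undir a a
  /-- at most one edge between any two nodes -/
  at_most_one : ∀ a b : V,
    (G.dir a b → ¬ G.dir b a ∧ ¬ G.bidir a b ∧ ¬ G.undir a b) ∧
    (G.bidir a b → ¬ G.undir a b)
  /-- ancestral: an anterior path from `a` to `b` excludes an edge into `a` -/
  ancestral : ∀ a b : V, G.AnteriorPath a b → ¬ G.ArrowAt a b
  /-- maximal: no inducing path between non-adjacent nodes -/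
  maximal : ∀ a b : V, a ≠ b → ¬ G.Adj a b → ¬ G.InducingPath a b
  /-- σ-complete, part 1: `a ∗→ b — c` forces `a, c` adjacent -/
  sigma_complete₁ : ∀ a b c : V, G.ArrowAt b a → G.undir b c → G.Adj a c
  /-- σ-complete, part 2: `a ∗→ b — c` and `b — d` force `c, d` adjacent -/
  sigma_complete₂ : ∀ a b c d : V, G.ArrowAt b a → G.undir b c → G.undir b d →
    c ≠ d → G.Adj c d

/-- The walk is m-open given `Z`. -/
def MixedGraph.Walk.MOpen {G : MixedGraph V} {n : ℕ} (w : G.Walk n) (Z : Set V) : Prop :=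
  (∀ k ≤ n, ¬ w.IsCollider k → w.vert k ∉ Z) ∧
  (∀ k, w.IsCollider k → G.AncS (w.vert k) Z) ∧
  (∀ k, 0 < k → k < n →
    ¬ (w.mk2 (k - 1) = Mark.arrow ∧ w.mk1 k = Mark.tail ∧ w.mk2 k = Mark.tail) ∧
    ¬ (w.mk1 (k - 1) = Mark.tail ∧ w.mk2 (k - 1) = Mark.tail ∧ w.mk1 k = Mark.arrow))

/-- `X` is m-separated from `Y` given `Z`: every walk from `X` to `Y` is m-blocked. -/
def MixedGraph.MSep (G : MixedGraph V) (X Y Z : Set V) : Prop :=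
  ∀ (n : ℕ) (w : G.Walk n), w.vert 0 ∈ X → w.vert n ∈ Y → ¬ w.MOpen Z

/-- A directed mixed graph (DMG): no undirected edges and no self-loops. -/
def MixedGraph.IsDMG (G : MixedGraph V) : Prop :=
  (∀ a b : V, ¬ G.undir a b) ∧ ∀ a : V, ¬ G.dir a a ∧ ¬ G.bidir a a

/-- Position `k` is an unblockable non-collider on the walk (in a DMG). -/
def MixedGraph.Walk.Unblockable {G : MixedGraph V} {n : ℕ} (w : G.Walk n) (k : ℕ) : Prop :=
  0 < k ∧ k < n ∧
  ((w.mk1 (k - 1) = Mark.arrow ∧ w.mk2 (k - 1) = Mark.tail ∧ w.mk1 k = Mark.arrow ∧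
      G.Sc (w.vert k) (w.vert (k - 1))) ∨
   (w.mk2 (k - 1) = Mark.arrow ∧ w.mk1 k = Mark.tail ∧ w.mk2 k = Mark.arrow ∧
      G.Sc (w.vert k) (w.vert (k + 1))) ∨
   (w.mk1 (k - 1) = Mark.arrow ∧ w.mk2 (k - 1) = Mark.tail ∧
      w.mk1 k = Mark.tail ∧ w.mk2 k = Mark.arrow ∧
      G.Sc (w.vert k) (w.vert (k - 1)) ∧ G.Sc (w.vert k) (w.vert (k + 1))))

/-- The walk is σ-open given `W`. -/
def MixedGraph.Walk.SigmaOpen {G : MixedGraph V} {n : ℕ} (w : G.Walk n) (W : Set V) : Prop :=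
  (∀ k, w.IsCollider k → G.AncS (w.vert k) W) ∧
  (∀ k ≤ n, ¬ w.IsCollider k → ¬ w.Unblockable k → w.vert k ∉ W)

/-- `X` is σ-separated from `Y` given `W`: every walk from `X` to `Y` is σ-blocked. -/
def MixedGraph.SigmaSep (G : MixedGraph V) (X Y W : Set V) : Prop :=
  ∀ (n : ℕ) (w : G.Walk n), w.vert 0 ∈ X → w.vert n ∈ Y → ¬ w.SigmaOpen W

/-- The walk is σ-inducing given `S`: each collider is an ancestor of the endpoints or
of `S`, and each non-endpoint non-collider is unblockable. -/
def MixedGraph.Walk.IsSigmaInducing {G : MixedGraph V} {n : ℕ} (w : G.Walk n) (S : Set V) :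
    Prop :=
  (∀ k, w.IsCollider k → G.AncS (w.vert k) ({w.vert 0, w.vert n} ∪ S)) ∧
  (∀ k, 0 < k → k < n → ¬ w.IsCollider k → w.Unblockable k)

/-- There is a σ-inducing path given `S` between `a` and `b`. -/
def MixedGraph.SigmaInducingPath (G : MixedGraph V) (S : Set V) (a b : V) : Prop :=
  ∃ (n : ℕ) (w : G.Walk n), w.IsPath ∧ w.vert 0 = a ∧ w.vert n = b ∧ w.IsSigmaInducing S

/-- The mixed graph `H` (on node set `V`) represents the graph `G` (on node set
`V⁺ = V ∪ S`, where `V` is embedded via `ι` and `S = (Set.range ι)ᶜ` is the set of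
selection nodes) given `S`. -/
def Represents {V W : Type*} (H : MixedGraph V) (G : MixedGraph W) (ι : V → W) : Prop :=
  Function.Injective ι ∧
  (∀ a : V, ¬ H.dir a a ∧ ¬ H.bidir a a ∧ ¬ H.undir a a) ∧
  (∀ a b : V,
    (H.dir a b → ¬ H.dir b a ∧ ¬ H.bidir a b ∧ ¬ H.undir a b) ∧
    (H.bidir a b → ¬ H.undir a b)) ∧
  (∀ a b : V, a ≠ b → (H.Adj a b ↔ G.SigmaInducingPath (Set.range ι)ᶜ (ι a) (ι b))) ∧
  (∀ a b : V, H.ArrowAt a b → ¬ G.AncS (ι a) ({ι b} ∪ (Set.range ι)ᶜ)) ∧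
  (∀ a b : V, H.TailAt a b → G.AncS (ι a) ({ι b} ∪ (Set.range ι)ᶜ))

/-- The walk (of length `n ≥ 3`) is a discriminating path for its second-to-last node
`vert (n-1)`: the endpoints are non-adjacent, and every node strictly between `vert 0`
and `vert (n-1)` is a collider and a parent of `vert n`. -/
def MixedGraph.Walk.IsDiscriminating {G : MixedGraph V} {n : ℕ} (w : G.Walk n) : Prop :=
  3 ≤ n ∧ w.IsPath ∧ ¬ G.Adj (w.vert 0) (w.vert n) ∧
  ∀ k, 0 < k → k < n - 1 → w.IsCollider k ∧ G.dir (w.vert k) (w.vert n)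

/-- The subwalk starting at position `i`, of length `m`. -/
def MixedGraph.Walk.shift {G : MixedGraph V} {n : ℕ} (w : G.Walk n) (i m : ℕ)
    (h : i + m ≤ n) : G.Walk m where
  vert k := w.vert (i + k)
  mk1 k := w.mk1 (i + k)
  mk2 k := w.mk2 (i + k)
  valid k hk := by
    have hv := w.valid (i + k) (by omega)
    have he : i + (k + 1) = i + k + 1 := by omega
    show G.EdgeMk (w.vert (i + k)) (w.vert (i + (k + 1))) (w.mk1 (i + k)) (w.mk2 (i + k))
    rw [he]
    exact hv

/-- The reversed walk. -/
def MixedGraph.Walk.reverse {G : MixedGraph V} {n : ℕ} (w : G.Walk n) : G.Walk n where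
  vert k := w.vert (n - k)
  mk1 k := w.mk2 (n - 1 - k)
  mk2 k := w.mk1 (n - 1 - k)
  valid i hi := by
    have hv := w.valid (n - 1 - i) (by omega)
    have h1 : n - 1 - i + 1 = n - i := by omega
    have h2 : n - (i + 1) = n - 1 - i := by omega
    rw [h1] at hv
    show G.EdgeMk (w.vert (n - i)) (w.vert (n - (i + 1))) (w.mk2 (n - 1 - i)) (w.mk1 (n - 1 - i))
    rw [h2]
    exact MixedGraph.edgeMk_symm hv

/-- `(a, b, c)` is an unshielded collider in `G`. -/
def MixedGraph.UnshieldedCollider (G : MixedGraph V) (a b c : V) : Prop :=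
  a ≠ c ∧ ¬ G.Adj a c ∧ G.ArrowAt b a ∧ G.ArrowAt b c

/-- Condition 1 for two σ-MAGs on the same node set: same adjacencies, same unshielded
colliders, and agreement of the collider status of the discriminated node on
corresponding discriminating paths. -/
def Condition1 {V : Type*} (H₁ H₂ : MixedGraph V) : Prop :=
  (∀ a b, H₁.Adj a b ↔ H₂.Adj a b) ∧
  (∀ a b c, H₁.UnshieldedCollider a b c ↔ H₂.UnshieldedCollider a b c) ∧
  (∀ (n : ℕ) (w₁ : H₁.Walk n) (w₂ : H₂.Walk n),
    (∀ k, w₂.vert k = w₁.vert k) →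
    w₁.IsDiscriminating → w₂.IsDiscriminating →
    (w₁.IsCollider (n - 1) ↔ w₂.IsCollider (n - 1)))

/-- `H₁` and `H₂` are m-Markov equivalent. -/
def MMarkovEquiv {V : Type*} (H₁ H₂ : MixedGraph V) : Prop :=
  ∀ X Y Z : Set V, H₁.MSep X Y Z ↔ H₂.MSep X Y Z

/-! ### Auxiliary development -/

namespace MixedGraph

open Classical

variable {G : MixedGraph V}

lemma adj_symm {x y : V} (h : G.Adj x y) : G.Adj y x := by
  rcases h with h | h | h | h
  · exact Or.inr (Or.inl h)
  · exact Or.inl h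
  · exact Or.inr (Or.inr (Or.inl (G.bidir_symm _ _ h)))
  · exact Or.inr (Or.inr (Or.inr (G.undir_symm _ _ h)))

/-- A chain of `E`-steps of length `m` along a function `f`. -/
def FChain (E : V → V → Prop) (f : ℕ → V) (m : ℕ) : Prop := ∀ i < m, E (f i) (f (i + 1))

/-- Tail-chain reachability (anterior walk). -/
def Rch (G : MixedGraph V) (u v : V) : Prop :=
  ∃ (m : ℕ) (f : ℕ → V), f 0 = u ∧ f m = v ∧ FChain G.TailAt f m

/-- Undirected chain of length `m`. -/
def UCh (G : MixedGraph V) (m : ℕ) (u v : V) : Prop :=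
  ∃ f : ℕ → V, f 0 = u ∧ f m = v ∧ FChain G.undir f m

lemma rch_refl (u : V) : G.Rch u u := ⟨0, fun _ => u, rfl, rfl, fun i hi => by omega⟩

lemma rch_single {u v : V} (h : G.TailAt u v) : G.Rch u v := by
  refine ⟨1, fun i => if i = 0 then u else v, by simp, by simp, fun i hi => ?_⟩
  have : i = 0 := by omega
  simpa [this] using h

lemma rch_trans {u v w : V} (h₁ : G.Rch u v) (h₂ : G.Rch v w) : G.Rch u w := by
  obtain ⟨m₁, f₁, hf₁0, hf₁m, hc₁⟩ := h₁
  obtain ⟨m₂, f₂, hf₂0, hf₂m, hc₂⟩ := h₂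
  refine ⟨m₁ + m₂, fun i => if i ≤ m₁ then f₁ i else f₂ (i - m₁), by simp [hf₁0], ?_, ?_⟩
  · by_cases h : m₂ = 0
    · have hvw : v = w := by rw [← hf₂0, ← hf₂m, h]
      subst h
      simpa [hf₁m] using hvw
    · have : ¬ (m₁ + m₂ ≤ m₁) := by omega
      simp [this, hf₂m]
  · intro i hi
    by_cases h1 : i + 1 ≤ m₁
    · have : i ≤ m₁ := by omega
      simpa [this, h1] using hc₁ i (by omega)
    · by_cases h2 : i ≤ m₁
      · have hieq : i = m₁ := by omega
        have := hc₂ 0 (by omega)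
        rw [hf₂0] at this
        have h3 : i + 1 - m₁ = 1 := by omega
        simpa [h2, h1, hieq, h3, hf₁m] using this
      · have := hc₂ (i - m₁) (by omega)
        have h3 : i + 1 - m₁ = i - m₁ + 1 := by omega
        simpa [h1, h2, h3] using this

lemma rch_of_anc {u v : V} (h : G.Anc u v) : G.Rch u v := by
  induction h with
  | refl => exact rch_refl u
  | tail _ hstep ih => exact rch_trans ih (rch_single (Or.inl hstep))

lemma uch_rch {m : ℕ} {u v : V} (h : G.UCh m u v) : G.Rch u v := by
  obtain ⟨f, h0, hm, hc⟩ := h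
  exact ⟨m, f, h0, hm, fun i hi => Or.inr (hc i hi)⟩

lemma uch_zero {u v : V} (h : G.UCh 0 u v) : u = v := by
  obtain ⟨f, h0, hm, -⟩ := h; rw [← h0, hm]

lemma uch_refl (u : V) : G.UCh 0 u u := ⟨fun _ => u, rfl, rfl, fun i hi => by omega⟩

lemma uch_single {u v : V} (h : G.undir u v) : G.UCh 1 u v := by
  refine ⟨fun i => if i = 0 then u else v, by simp, by simp, fun i hi => ?_⟩
  have : i = 0 := by omega
  simpa [this] using h

lemma uch_cons {m : ℕ} {u v w : V} (h : G.undir u v) (hc : G.UCh m v w) :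
    G.UCh (m + 1) u w := by
  obtain ⟨f, h0, hm, hch⟩ := hc
  refine ⟨fun i => if i = 0 then u else f (i - 1), by simp, by simp [hm], fun i hi => ?_⟩
  rcases Nat.eq_zero_or_pos i with h' | h'
  · simpa [h', h0] using h
  · have h1 : ¬ (i = 0) := by omega
    have h2 : ¬ (i + 1 = 0) := by omega
    have h3 : i + 1 - 1 = i - 1 + 1 := by omega
    simp only [h1, h2, if_false, h3]
    exact hch (i - 1) (by omega)

lemma uch_head {m : ℕ} {u w : V} (h : G.UCh (m + 1) u w) :
    ∃ v, G.undir u v ∧ G.UCh m v w := by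
  obtain ⟨f, h0, hm, hch⟩ := h
  exact ⟨f 1, h0 ▸ hch 0 (by omega),
    ⟨fun i => f (i + 1), rfl, hm, fun i hi => hch (i + 1) (by omega)⟩⟩

lemma uch_snoc {m : ℕ} {u v w : V} (hc : G.UCh m u v) (h : G.undir v w) :
    G.UCh (m + 1) u w := by
  induction m generalizing u with
  | zero => rw [uch_zero hc]; exact uch_single h
  | succ k ih =>
    obtain ⟨x, hx, hc'⟩ := uch_head hc
    exact uch_cons hx (ih hc')

lemma uch_symm {m : ℕ} {u v : V} (h : G.UCh m u v) : G.UCh m v u := by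
  induction m generalizing u with
  | zero => rw [uch_zero h]; exact uch_refl v
  | succ k ih =>
    obtain ⟨x, hx, hc'⟩ := uch_head h
    exact uch_snoc (ih hc') (G.undir_symm _ _ hx)

/-- From a tail-chain one can extract an anterior path. -/
lemma rch_anterior {u v : V} (h : G.Rch u v) : G.AnteriorPath u v := by
  obtain ⟨m, f, h0, hm, hc⟩ := h
  subst h0; subst hm
  induction m using Nat.strong_induction_on generalizing f with
  | _ m ih =>
  by_cases hrep : ∃ i j, i < j ∧ j ≤ m ∧ f i = f j
  · obtain ⟨i, j, hij, hjm, heq⟩ := hrep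
    set g : ℕ → V := fun k => if k ≤ i then f k else f (k + (j - i)) with hg
    set m' : ℕ := m - (j - i) with hm'
    have hgc : FChain G.TailAt g m' := by
      intro k hk
      by_cases h1 : k + 1 ≤ i
      · have h2 : k ≤ i := by omega
        simpa [hg, h2, h1] using hc k (by omega)
      · by_cases h2 : k ≤ i
        · have hk' : k = i := by omega
          have h4 : k + 1 + (j - i) = j + 1 := by omega
          have e1 : g k = f j := by
            simp only [hg]
            rw [if_pos (by omega : k ≤ i), hk', heq]
          have e2 : g (k + 1) = f (j + 1) := by
            simp only [hg]
            rw [if_neg h1, h4]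
          rw [e1, e2]
          exact hc j (by omega)
        · have h4 : k + 1 + (j - i) = k + (j - i) + 1 := by omega
          simp only [hg, h2, h1, if_neg, not_false_iff, h4]
          exact hc (k + (j - i)) (by omega)
    have hres := ih m' (by omega) g hgc
    have e0 : g 0 = f 0 := by simp [hg]
    have em : g m' = f m := by
      by_cases h1 : m' ≤ i
      · have h2 : m' = i := by omega
        have h3 : m = j := by omega
        show (if m' ≤ i then f m' else f (m' + (j - i))) = f m
        rw [if_pos h1, h2, heq, h3]
      · have h4 : m' + (j - i) = m := by omega
        show (if m' ≤ i then f m' else f (m' + (j - i))) = f m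
        rw [if_neg h1, h4]
    rw [e0, em] at hres
    exact hres
  · push_neg at hrep
    have hinj : ∀ i j, i ≤ m → j ≤ m → f i = f j → i = j := by
      intro i j hi hj heq
      by_contra hne
      rcases Nat.lt_or_ge i j with h' | h'
      · exact hrep i j h' hj heq
      · exact hrep j i (by omega) hi heq.symm
    refine ⟨m, ⟨f, fun _ => Mark.tail,
      fun i => if G.undir (f i) (f (i + 1)) then Mark.tail else Mark.arrow, ?_⟩,
      hinj, rfl, rfl, fun i _ => rfl⟩
    intro i hi
    by_cases hu : G.undir (f i) (f (i + 1))
    · simp only [if_pos hu]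
      exact hu
    · simp only [if_neg hu]
      rcases hc i hi with hd | hd
      · exact hd
      · exact absurd hd hu

/-- Key consequence of ancestrality: no arrowhead at `u` on an edge between `u` and `v`
if there is a tail-chain (anterior walk) from `u` to `v`. -/
lemma no_arrow_of_rch (hG : G.IsSigmaMAG) {u v : V} (h : G.Rch u v)
    (ha : G.ArrowAt u v) : False := by
  by_cases huv : u = v
  · subst huv
    rcases ha with ha | ha
    · exact (hG.no_self u).1 ha
    · exact (hG.no_self u).2.1 ha
  · exact hG.ancestral u v (rch_anterior h) ha

lemma rch_two {u v w : V} (h1 : G.TailAt u v) (h2 : G.TailAt v w) : G.Rch u w :=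
  rch_trans (rch_single h1) (rch_single h2)

end MixedGraph


namespace MixedGraph

variable {G : MixedGraph V}

lemma uch_one {u v : V} (h : G.UCh 1 u v) : G.undir u v := by
  obtain ⟨w, hw, hz⟩ := uch_head h
  rwa [uch_zero hz] at hw

/-- A "spine": the combinatorial core extracted from a minimal m-open walk between
non-adjacent `a` and `b`: a sequence of distinct nodes with arrowheads at all interior
nodes, bidirected interior edges, where every interior node is either an ancestor of an
endpoint or has an undirected connection towards an endpoint. -/
structure Spine (G : MixedGraph V) (a b : V) (n : ℕ) where
  t : ℕ → V
  n2 : 2 ≤ n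
  t0 : t 0 = a
  tn : t n = b
  distinct : ∀ i j, i ≤ n → j ≤ n → t i = t j → i = j
  first : G.ArrowAt (t 1) (t 0)
  last : G.ArrowAt (t (n - 1)) (t n)
  mids : ∀ i, 1 ≤ i → i ≤ n - 2 → G.bidir (t i) (t (i + 1))
  facts : ∀ i, 1 ≤ i → i ≤ n - 1 →
    G.Anc (t i) a ∨ G.Anc (t i) b ∨
    (∃ u m, G.undir (t i) u ∧ G.UCh m u a) ∨ (∃ u m, G.undir (t i) u ∧ G.UCh m u b)

namespace Spine

variable {a b : V} {n : ℕ}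

lemma ne_a (S : Spine G a b n) {i : ℕ} (h1 : 1 ≤ i) (h2 : i ≤ n - 1) : S.t i ≠ a := by
  intro h
  have := S.distinct i 0 (by omega) (by omega) (by rw [h, S.t0])
  omega

lemma ne_b (S : Spine G a b n) {i : ℕ} (h1 : 1 ≤ i) (h2 : i ≤ n - 1) : S.t i ≠ b := by
  intro h
  have hn2 := S.n2
  have := S.distinct i n (by omega) le_rfl (by rw [h, S.tn])
  omega

lemma arrow_left (S : Spine G a b n) {i : ℕ} (h1 : 1 ≤ i) (h2 : i ≤ n - 1) :
    G.ArrowAt (S.t i) (S.t (i - 1)) := by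
  rcases Nat.eq_or_lt_of_le h1 with h | h
  · rw [← h]
    exact S.first
  · have hm := S.mids (i - 1) (by omega) (by omega)
    rw [show i - 1 + 1 = i by omega] at hm
    exact Or.inr (G.bidir_symm _ _ hm)

lemma arrow_right (S : Spine G a b n) {i : ℕ} (h1 : 1 ≤ i) (h2 : i ≤ n - 1) :
    G.ArrowAt (S.t i) (S.t (i + 1)) := by
  rcases Nat.eq_or_lt_of_le h2 with h | h
  · rw [h, show n - 1 + 1 = n by have := S.n2; omega]
    exact S.last
  · exact Or.inr (S.mids i h1 (by omega))

/-- The reversed spine. -/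
def reverse (S : Spine G a b n) : Spine G b a n where
  t := fun i => S.t (n - i)
  n2 := S.n2
  t0 := by simp [S.tn]
  tn := by simp [S.t0]
  distinct := by
    intro i j hi hj h
    have := S.distinct (n - i) (n - j) (by omega) (by omega) h
    omega
  first := by
    have h := S.last
    simpa using h
  last := by
    have h := S.first
    have hn := S.n2
    rw [show n - (n - 1) = 1 by omega, show n - n = 0 by omega]
    exact h
  mids := by
    intro i h1 h2
    have hn := S.n2
    have hm := S.mids (n - i - 1) (by omega) (by omega)
    rw [show n - i - 1 + 1 = n - i by omega] at hm
    rw [show n - (i + 1) = n - i - 1 by omega]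
    exact G.bidir_symm _ _ hm
  facts := by
    intro i h1 h2
    have hn := S.n2
    rcases S.facts (n - i) (by omega) (by omega) with h | h | h | h
    · exact Or.inr (Or.inl h)
    · exact Or.inl h
    · exact Or.inr (Or.inr (Or.inr h))
    · exact Or.inr (Or.inr (Or.inl h))

/-- Shorten a spine using a bidirected edge from an interior node to `b`. -/
def shorten (S : Spine G a b n) {i : ℕ} (h2 : 2 ≤ i) (hin : i ≤ n - 2)
    (hb : G.bidir (S.t (i - 1)) b) : Spine G a b i where
  t := fun j => if j < i then S.t j else b
  n2 := h2
  t0 := by rw [if_pos (by omega : 0 < i)]; exact S.t0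
  tn := by rw [if_neg (by omega : ¬ i < i)]
  distinct := by
    intro j k hj hk h
    have hn := S.n2
    by_cases hji : j < i <;> by_cases hki : k < i
    · rw [if_pos hji, if_pos hki] at h
      exact S.distinct j k (by omega) (by omega) h
    · rw [if_pos hji, if_neg hki] at h
      have := S.distinct j n (by omega) le_rfl (by rw [h, S.tn])
      omega
    · rw [if_neg hji, if_pos hki] at h
      have := S.distinct n k le_rfl (by omega) (by rw [← h, S.tn])
      omega
    · omega
  first := by
    rw [if_pos (by omega : 1 < i), if_pos (by omega : 0 < i)]
    exact S.first
  last := by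
    rw [if_pos (by omega : i - 1 < i), if_neg (by omega : ¬ i < i)]
    exact Or.inr hb
  mids := by
    intro j h1 hji
    rw [if_pos (by omega : j < i), if_pos (by omega : j + 1 < i)]
    exact S.mids j h1 (by omega)
  facts := by
    intro j h1 hji
    rw [if_pos (by omega : j < i)]
    exact S.facts j h1 (by omega)

end Spine

/-- Eliminating an interior node with an undirected edge to `b`. -/
lemma spine_M1 (hG : G.IsSigmaMAG) {a b : V} {n : ℕ} (hnadj : ¬ G.Adj a b)
    (S : Spine G a b n)
    (ihn : ∀ n' < n, ∀ a' b' : V, ¬ G.Adj a' b' → Spine G a' b' n' → False) :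
    ∀ i, 1 ≤ i → i ≤ n - 1 → G.undir (S.t i) b → False := by
  intro i
  induction i using Nat.strong_induction_on with
  | _ i ihi =>
  intro h1 h2 hu
  by_cases hlast : i = n - 1
  · subst hlast
    have hlast' := S.last
    rw [S.tn] at hlast'
    exact no_arrow_of_rch hG (rch_single (Or.inr hu)) hlast'
  · have hAx : G.ArrowAt (S.t i) (S.t (i - 1)) := S.arrow_left h1 h2
    have hadj : G.Adj (S.t (i - 1)) b := hG.sigma_complete₁ _ _ _ hAx hu
    by_cases hi1 : i = 1
    · subst hi1
      rw [show (1 : ℕ) - 1 = 0 from rfl, S.t0] at hadj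
      exact hnadj hadj
    · have hx1 : 1 ≤ i - 1 := by omega
      have hAxr : G.ArrowAt (S.t (i - 1)) (S.t i) := by
        have h := S.arrow_right hx1 (by omega)
        rwa [show i - 1 + 1 = i by omega] at h
      rcases hadj with hd | hd | hd | hd
      · exact no_arrow_of_rch hG
          (rch_two (Or.inl hd) (Or.inr (G.undir_symm _ _ hu))) hAxr
      · exact no_arrow_of_rch hG (rch_two (Or.inr hu) (Or.inl hd)) hAx
      · exact ihn i (by omega) a b hnadj (S.shorten (by omega) (by omega) hd)
      · exact ihi (i - 1) (by omega) hx1 (by omega) hd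

/-- Eliminating an interior node with an undirected chain to `b`. -/
lemma spine_BE (hG : G.IsSigmaMAG) {a b : V} {n : ℕ} (hnadj : ¬ G.Adj a b)
    (S : Spine G a b n)
    (ihn : ∀ n' < n, ∀ a' b' : V, ¬ G.Adj a' b' → Spine G a' b' n' → False) :
    ∀ m, 1 ≤ m → ∀ i, 1 ≤ i → i ≤ n - 1 → G.UCh m (S.t i) b → False := by
  intro m
  induction m using Nat.strong_induction_on with
  | _ m ihm =>
  intro hm1
  have inner : ∀ d i, d = n - 1 - i → 1 ≤ i → i ≤ n - 1 → G.UCh m (S.t i) b → False := by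
    intro d
    induction d using Nat.strong_induction_on with
    | _ d ihd =>
    intro i hd h1 h2 hch
    by_cases hlast : i = n - 1
    · subst hlast
      have hlast' := S.last
      rw [S.tn] at hlast'
      exact no_arrow_of_rch hG (uch_rch hch) hlast'
    · -- i ≤ n - 2
      obtain ⟨m', rfl⟩ : ∃ k, m = k + 1 := ⟨m - 1, by omega⟩
      obtain ⟨w₁, hw₁, hch'⟩ := uch_head hch
      rcases Nat.eq_zero_or_pos m' with hm0 | hm0
      · subst hm0
        rw [uch_zero hch'] at hw₁
        exact spine_M1 hG hnadj S ihn i h1 h2 hw₁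
      · -- m' ≥ 1, so w₁ ≠ b is not needed; analyse the edge between t (i+1) and w₁
        have hby : G.bidir (S.t i) (S.t (i + 1)) := S.mids i h1 (by omega)
        have hyne : S.t (i + 1) ≠ w₁ := by
          intro h
          exact (hG.at_most_one (S.t i) (S.t (i + 1))).2 hby (h ▸ hw₁)
        have hadj : G.Adj (S.t (i + 1)) w₁ :=
          hG.sigma_complete₁ _ _ _ (Or.inr hby) hw₁
        rcases hadj with hd | hd | hd | hd
        · -- dir (t (i+1)) w₁ : tail-chain t (i+1) → w₁ — t i, arrowhead at t (i+1) from t i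
          exact no_arrow_of_rch hG
            (rch_two (Or.inl hd) (Or.inr (G.undir_symm _ _ hw₁)))
            (Or.inr (G.bidir_symm _ _ hby))
        · -- dir w₁ (t (i+1)) : tail-chain t i — w₁ → t (i+1), arrowhead at t i
          exact no_arrow_of_rch hG (rch_two (Or.inr hw₁) (Or.inl hd)) (Or.inr hby)
        · -- bidir (t (i+1)) w₁ : apply σ-completeness₂ at w₁
          obtain ⟨m'', rfl⟩ : ∃ k, m' = k + 1 := ⟨m' - 1, by omega⟩
          obtain ⟨w₂, hw₂, hch''⟩ := uch_head hch'
          by_cases hw2i : w₂ = S.t i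
          · have hm2 : 1 ≤ m'' := by
              rcases Nat.eq_zero_or_pos m'' with h0 | h0
              · subst h0
                rw [uch_zero hch''] at hw2i
                exact absurd hw2i.symm (S.ne_b h1 h2)
              · exact h0
            exact ihm m'' (by omega) hm2 i h1 h2 (hw2i ▸ hch'')
          · have hadj2 : G.Adj (S.t i) w₂ :=
              hG.sigma_complete₂ (S.t (i + 1)) w₁ (S.t i) w₂
                (Or.inr (G.bidir_symm _ _ hd)) (G.undir_symm _ _ hw₁) hw₂
                (fun h => hw2i h.symm)
            have hne1 : ¬ G.ArrowAt (S.t i) w₂ := fun h =>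
              no_arrow_of_rch hG (rch_two (Or.inr hw₁) (Or.inr hw₂)) h
            have hne2 : ¬ G.ArrowAt w₂ (S.t i) := fun h =>
              no_arrow_of_rch hG
                (rch_two (Or.inr (G.undir_symm _ _ hw₂)) (Or.inr (G.undir_symm _ _ hw₁))) h
            rcases hadj2 with hd2 | hd2 | hd2 | hd2
            · exact hne2 (Or.inl hd2)
            · exact hne1 (Or.inl hd2)
            · exact hne1 (Or.inr hd2)
            · exact ihm (m'' + 1) (by omega) (by omega) i h1 h2 (uch_cons hd2 hch'')
        · -- undir (t (i+1)) w₁ : move one step to the right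
          exact ihd (n - 1 - (i + 1)) (by omega) (i + 1) rfl (by omega) (by omega)
            (uch_cons hd hch')
  intro i h1 h2 hch
  exact inner (n - 1 - i) i rfl h1 h2 hch

/-- A spine between non-adjacent nodes yields a contradiction. -/
lemma spine_false (hG : G.IsSigmaMAG) :
    ∀ n, ∀ a b : V, ¬ G.Adj a b → Spine G a b n → False := by
  intro n
  induction n using Nat.strong_induction_on with
  | _ n ihn =>
  intro a b hnadj S
  have hab : a ≠ b := by
    intro h
    have := S.distinct 0 n (by omega) le_rfl (by rw [S.t0, S.tn, h])
    have := S.n2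
    omega
  -- every interior node is an ancestor of an endpoint
  have good : ∀ i, 1 ≤ i → i ≤ n - 1 → G.Anc (S.t i) a ∨ G.Anc (S.t i) b := by
    intro i h1 h2
    rcases S.facts i h1 h2 with h | h | ⟨u, m, hu, hch⟩ | ⟨u, m, hu, hch⟩
    · exact Or.inl h
    · exact Or.inr h
    · -- witness towards a: use the reversed spine
      exfalso
      have hn := S.n2
      refine spine_BE hG (fun h => hnadj (adj_symm h)) S.reverse ihn (m + 1) (by omega)
        (n - i) (by omega) (by omega) ?_
      have : S.reverse.t (n - i) = S.t i := by
        show S.t (n - (n - i)) = S.t i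
        rw [show n - (n - i) = i by omega]
      rw [this]
      exact uch_cons hu hch
    · exact spine_BE hG hnadj S ihn (m + 1) (by omega) i h1 h2 (uch_cons hu hch) |>.elim
  -- build an inducing path, contradicting maximality
  apply hG.maximal a b hab hnadj
  classical
  refine ⟨n, ⟨S.t,
      fun i => if i = 0 then (if G.dir (S.t 0) (S.t 1) then Mark.tail else Mark.arrow)
        else Mark.arrow,
      fun i => if i = n - 1 then (if G.dir (S.t n) (S.t (n - 1)) then Mark.tail else Mark.arrow)
        else Mark.arrow, ?_⟩, S.distinct, S.t0, S.tn, ?_⟩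
  · intro i hi
    have hn := S.n2
    by_cases h0 : i = 0
    · subst h0
      rw [if_pos rfl, if_neg (by omega : (0:ℕ) ≠ n - 1)]
      by_cases hdir : G.dir (S.t 0) (S.t 1)
      · rw [if_pos hdir]; exact hdir
      · rw [if_neg hdir]
        rcases S.first with h | h
        · exact absurd h hdir
        · exact G.bidir_symm _ _ h
    · by_cases hl : i = n - 1
      · subst hl
        rw [if_neg h0, if_pos rfl]
        by_cases hdir : G.dir (S.t n) (S.t (n - 1))
        · rw [if_pos hdir, show n - 1 + 1 = n by omega]
          exact hdir
        · rw [if_neg hdir, show n - 1 + 1 = n by omega]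
          rcases S.last with h | h
          · exact absurd h hdir
          · exact h
      · rw [if_neg h0, if_neg hl]
        exact S.mids i (by omega) (by omega)
  · intro k hk1 hk2
    have hn := S.n2
    constructor
    · exact ⟨hk1, hk2, by dsimp only; rw [if_neg (by omega : ¬ k - 1 = n - 1)],
        by dsimp only; rw [if_neg (by omega : ¬ k = 0)]⟩
    · rcases good k (by omega) (by omega) with h | h
      · refine Or.inl ?_
        show G.Anc (S.t k) (S.t 0)
        rw [S.t0]
        exact h
      · refine Or.inr ?_
        show G.Anc (S.t k) (S.t n)
        rw [S.tn]
        exact h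

end MixedGraph


namespace MixedGraph

variable {G : MixedGraph V}

/-- An ancestor of the start of an undirected chain is an ancestor of its end, or has
its own undirected edge towards the end. -/
lemma anc_uch (hG : G.IsSigmaMAG) :
    ∀ m, ∀ v z t : V, G.Anc v z → G.UCh m z t →
    G.Anc v t ∨ ∃ u m', m' < m ∧ G.undir v u ∧ G.UCh m' u t := by
  intro m
  induction m using Nat.strong_induction_on with
  | _ m ihm =>
  intro v z t hanc huch
  induction hanc using Relation.ReflTransGen.head_induction_on with
  | refl =>
    rcases Nat.eq_zero_or_pos m with h0 | h0
    · left
      subst h0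
      cases uch_zero huch
      exact Relation.ReflTransGen.refl
    · obtain ⟨m', rfl⟩ : ∃ k, m = k + 1 := ⟨m - 1, by omega⟩
      obtain ⟨u, hu, hch⟩ := uch_head huch
      exact Or.inr ⟨u, m', by omega, hu, hch⟩
  | head hstep _ ih =>
    rename_i v' c _
    rcases ih with h | ⟨u, m', hm', hu, hch⟩
    · exact Or.inl (Relation.ReflTransGen.head hstep h)
    · have hne : ¬ G.ArrowAt v' u := fun h =>
        no_arrow_of_rch hG (rch_two (Or.inl hstep) (Or.inr hu)) h
      rcases hG.sigma_complete₁ v' c u (Or.inl hstep) hu with hd | hd | hd | hd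
      · rcases ihm m' hm' v' u t (Relation.ReflTransGen.single hd) hch with h | ⟨u', m'', h1, h2, h3⟩
        · exact Or.inl h
        · exact Or.inr ⟨u', m'', by omega, h2, h3⟩
      · exact absurd (Or.inl hd) hne
      · exact absurd (Or.inr hd) hne
      · exact Or.inr ⟨u, m', hm', hd, hch⟩

/-- The candidate separating set for non-adjacent `a`, `b`. -/
def ZGood (G : MixedGraph V) (a b v : V) : Prop :=
  G.Anc v a ∨ G.Anc v b ∨ (∃ m, G.UCh m v a) ∨ (∃ m, G.UCh m v b)

def ZSet (G : MixedGraph V) (a b : V) : Set V :=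
  {v | v ≠ a ∧ v ≠ b ∧ G.ZGood a b v}

lemma zgood_of_anc_zgood (hG : G.IsSigmaMAG) {a b v z : V} (hanc : G.Anc v z)
    (hz : G.ZGood a b z) : G.ZGood a b v := by
  rcases hz with h | h | ⟨m, h⟩ | ⟨m, h⟩
  · exact Or.inl (hanc.trans h)
  · exact Or.inr (Or.inl (hanc.trans h))
  · rcases anc_uch hG m v z a hanc h with h' | ⟨u, m', _, hu, hch⟩
    · exact Or.inl h'
    · exact Or.inr (Or.inr (Or.inl ⟨m' + 1, uch_cons hu hch⟩))
  · rcases anc_uch hG m v z b hanc h with h' | ⟨u, m', _, hu, hch⟩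
    · exact Or.inr (Or.inl h')
    · exact Or.inr (Or.inr (Or.inr ⟨m' + 1, uch_cons hu hch⟩))

lemma zgood_of_ancS (hG : G.IsSigmaMAG) {a b v : V} (h : G.AncS v (G.ZSet a b)) :
    G.ZGood a b v := by
  obtain ⟨z, hz, hanc⟩ := h
  exact zgood_of_anc_zgood hG hanc hz.2.2

/-- Deduplicating raw spine data yields a genuine spine. -/
lemma spine_of_raw {a b : V} (hab : a ≠ b) :
    ∀ n, 2 ≤ n → ∀ t : ℕ → V, t 0 = a → t n = b →
    (∀ i, 1 ≤ i → i ≤ n - 1 → t i ≠ a ∧ t i ≠ b) →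
    G.ArrowAt (t 1) (t 0) → G.ArrowAt (t (n - 1)) (t n) →
    (∀ i, 1 ≤ i → i ≤ n - 2 → G.bidir (t i) (t (i + 1))) →
    (∀ i, 1 ≤ i → i ≤ n - 1 →
      G.Anc (t i) a ∨ G.Anc (t i) b ∨
      (∃ u m, G.undir (t i) u ∧ G.UCh m u a) ∨ (∃ u m, G.undir (t i) u ∧ G.UCh m u b)) →
    ∃ n', Nonempty (Spine G a b n') := by
  intro n
  induction n using Nat.strong_induction_on with
  | _ n ihn =>
  intro hn2 t h0 hnb hne hfirst hlast hmids hfacts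
  by_cases hrep : ∃ i j, i < j ∧ j ≤ n ∧ t i = t j
  · obtain ⟨i, j, hij, hjn, heq⟩ := hrep
    have hi1 : 1 ≤ i := by
      rcases Nat.eq_zero_or_pos i with h | h
      · exfalso
        subst h
        rw [h0] at heq
        by_cases hj : j = n
        · rw [hj, hnb] at heq
          exact hab heq
        · exact (hne j (by omega) (by omega)).1 heq.symm
      · exact h
    have hj1 : j ≤ n - 1 := by
      rcases Nat.eq_or_lt_of_le hjn with h | h
      · exfalso
        rw [h, hnb] at heq
        exact (hne i hi1 (by omega)).2 heq
      · omega
    set n' := n - (j - i) with hn'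
    have h2n' : 2 ≤ n' := by omega
    have hn'i : i + 1 ≤ n' := by omega
    refine ihn n' (by omega) h2n' (fun k => if k ≤ i then t k else t (k + (j - i)))
      ?_ ?_ ?_ ?_ ?_ ?_ ?_
    · rw [if_pos (by omega : (0:ℕ) ≤ i)]
      exact h0
    · rw [if_neg (by omega : ¬ n' ≤ i), show n' + (j - i) = n by omega]
      exact hnb
    · intro k hk1 hk2
      by_cases hk : k ≤ i
      · rw [if_pos hk]
        exact hne k hk1 (by omega)
      · rw [if_neg hk]
        exact hne (k + (j - i)) (by omega) (by omega)
    · rw [if_pos (by omega : 1 ≤ i), if_pos (by omega : (0:ℕ) ≤ i)]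
      exact hfirst
    · by_cases hl : n' - 1 ≤ i
      · have hji : j = n - 1 := by omega
        have hii : n' - 1 = i := by omega
        rw [if_pos hl, if_neg (by omega : ¬ n' ≤ i), show n' + (j - i) = n by omega,
          hii, heq, hji]
        exact hlast
      · rw [if_neg hl, if_neg (by omega : ¬ n' ≤ i), show n' + (j - i) = n by omega,
          show n' - 1 + (j - i) = n - 1 by omega]
        exact hlast
    · intro k hk1 hk2
      by_cases hk : k + 1 ≤ i
      · rw [if_pos (by omega : k ≤ i), if_pos hk]
        exact hmids k hk1 (by omega)
      · by_cases hk' : k ≤ i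
        · have hki : k = i := by omega
          rw [if_pos hk', if_neg hk, show k + 1 + (j - i) = j + 1 by omega, hki, heq]
          exact hmids j (by omega) (by omega)
        · rw [if_neg hk', if_neg (by omega : ¬ k + 1 ≤ i),
            show k + 1 + (j - i) = k + (j - i) + 1 by omega]
          exact hmids (k + (j - i)) (by omega) (by omega)
    · intro k hk1 hk2
      by_cases hk : k ≤ i
      · rw [if_pos hk]
        exact hfacts k hk1 (by omega)
      · rw [if_neg hk]
        exact hfacts (k + (j - i)) (by omega) (by omega)
  · push_neg at hrep
    refine ⟨n, ⟨⟨t, hn2, h0, hnb, ?_, hfirst, hlast, hmids, hfacts⟩⟩⟩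
    intro i j hi hj h
    by_contra hij
    rcases Nat.lt_or_ge i j with h' | h'
    · exact hrep i j h' hj h
    · exact hrep j i (by omega) hi h.symm

end MixedGraph


namespace MixedGraph

variable {G : MixedGraph V}

lemma mark_cases (m : Mark) : m = Mark.tail ∨ m = Mark.arrow := by
  cases m
  · exact Or.inl rfl
  · exact Or.inr rfl

lemma shift_mopen {n : ℕ} {w : G.Walk n} {Z : Set V} (h : w.MOpen Z) {i m : ℕ}
    (him : i + m ≤ n) (hi0 : w.vert i ∉ Z) (him' : w.vert (i + m) ∉ Z) :
    (w.shift i m him).MOpen Z := by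
  obtain ⟨hnc, hc, hpat⟩ := h
  have hcoll : ∀ k, 0 < k → k < m →
      ((w.shift i m him).IsCollider k ↔ w.IsCollider (i + k)) := by
    intro k h1 h2
    constructor
    · rintro ⟨-, -, ha, hb⟩
      refine ⟨by omega, by omega, ?_, hb⟩
      have he : i + (k - 1) = i + k - 1 := by omega
      show w.mk2 (i + k - 1) = Mark.arrow
      rw [← he]
      exact ha
    · rintro ⟨-, -, ha, hb⟩
      refine ⟨h1, h2, ?_, hb⟩
      show w.mk2 (i + (k - 1)) = Mark.arrow
      rw [show i + (k - 1) = i + k - 1 by omega]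
      exact ha
  refine ⟨?_, ?_, ?_⟩
  · intro k hk hkc
    by_cases hk0 : k = 0
    · subst hk0
      show w.vert (i + 0) ∉ Z
      rw [Nat.add_zero]
      exact hi0
    · by_cases hkm : k = m
      · subst hkm
        exact him'
      · refine hnc (i + k) (by omega) ?_
        intro hcc
        exact hkc ((hcoll k (by omega) (by omega)).2 hcc)
  · intro k hkc
    have h1 : 0 < k := hkc.1
    have h2 : k < m := hkc.2.1
    exact hc (i + k) ((hcoll k h1 h2).1 hkc)
  · intro k h1 h2
    have hp := hpat (i + k) (by omega) (by omega)
    constructor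
    · intro ⟨ha, hb, hcc⟩
      refine hp.1 ⟨?_, hb, hcc⟩
      rw [show i + k - 1 = i + (k - 1) by omega]
      exact ha
    · intro ⟨ha, hb, hcc⟩
      refine hp.2 ⟨?_, ?_, hcc⟩
      · rw [show i + k - 1 = i + (k - 1) by omega]
        exact ha
      · rw [show i + k - 1 = i + (k - 1) by omega]
        exact hb

lemma walk_short {a b : V} {n : ℕ} (w : G.Walk n) (hn : n ≤ 1) (h0 : w.vert 0 = a)
    (hn' : w.vert n = b) : a = b ∨ G.Adj a b := by
  rcases Nat.le_one_iff_eq_zero_or_eq_one.mp hn with rfl | rfl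
  · left
    rw [← h0, hn']
  · right
    have hv := w.valid 0 (by omega)
    rw [h0] at hv
    rw [show (0:ℕ) + 1 = 1 from rfl, hn'] at hv
    rcases mark_cases (w.mk1 0) with h1 | h1 <;> rcases mark_cases (w.mk2 0) with h2 | h2 <;>
      rw [h1, h2] at hv
    · exact Or.inr (Or.inr (Or.inr hv))
    · exact Or.inl hv
    · exact Or.inr (Or.inl hv)
    · exact Or.inr (Or.inr (Or.inl hv))

/-- The separation lemma: non-adjacent nodes in a σ-MAG are m-separated by `ZSet`. -/
lemma msep_of_not_adj (hG : G.IsSigmaMAG) {a b : V} (hab : a ≠ b) (hnadj : ¬ G.Adj a b) :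
    G.MSep {a} {b} (G.ZSet a b) := by
  classical
  by_contra hms
  rw [MSep] at hms
  push_neg at hms
  obtain ⟨n₁, w₁, h01, hn1, hopen1⟩ := hms
  have hexP : ∃ n, ∃ w : G.Walk n, w.vert 0 = a ∧ w.vert n = b ∧ w.MOpen (G.ZSet a b) :=
    ⟨n₁, w₁, h01, hn1, hopen1⟩
  set N := Nat.find hexP with hNdef
  obtain ⟨w, h0, hnb, hopen⟩ := Nat.find_spec hexP
  have hmin : ∀ m, m < N →
      ¬ ∃ w : G.Walk m, w.vert 0 = a ∧ w.vert m = b ∧ w.MOpen (G.ZSet a b) :=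
    fun m hm => Nat.find_min hexP hm
  have hN2 : 2 ≤ N := by
    by_contra hlt
    rcases walk_short w (by omega) h0 hnb with h | h
    · exact hab h
    · exact hnadj h
  have hanotZ : a ∉ G.ZSet a b := fun h => h.1 rfl
  have hbnotZ : b ∉ G.ZSet a b := fun h => h.2.1 rfl
  have hint : ∀ k, 0 < k → k < N → w.vert k ≠ a ∧ w.vert k ≠ b := by
    intro k hk0 hkN
    constructor
    · intro hka
      refine hmin (N - k) (by omega) ⟨w.shift k (N - k) (by omega), ?_, ?_, ?_⟩
      · show w.vert (k + 0) = a
        rw [Nat.add_zero]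
        exact hka
      · show w.vert (k + (N - k)) = b
        rw [show k + (N - k) = N by omega]
        exact hnb
      · refine shift_mopen hopen _ ?_ ?_
        · rw [hka]; exact hanotZ
        · rw [show k + (N - k) = N by omega, hnb]; exact hbnotZ
    · intro hkb
      refine hmin k (by omega) ⟨w.shift 0 k (by omega), ?_, ?_, ?_⟩
      · show w.vert (0 + 0) = a
        exact h0
      · show w.vert (0 + k) = b
        rw [Nat.zero_add]
        exact hkb
      · refine shift_mopen hopen _ ?_ ?_
        · rw [h0]; exact hanotZ
        · rw [Nat.zero_add, hkb]; exact hbnotZ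
  have hblock : ∀ k, ¬ w.IsCollider k → 0 < k → k < N → G.ZGood a b (w.vert k) → False := by
    intro k hnc hk0 hkN hg
    exact hopen.1 k (by omega) hnc ⟨(hint k hk0 hkN).1, (hint k hk0 hkN).2, hg⟩
  have hancgood : ∀ (v : V) (k : ℕ), w.IsCollider k → G.Anc v (w.vert k) →
      G.ZGood a b v := fun v k hc hanc =>
    zgood_of_anc_zgood hG hanc (zgood_of_ancS hG (hopen.2.1 k hc))
  have hdesc : ∀ l, 0 < l → l < N → ¬ w.IsCollider l →
      ∀ j, j < l → w.mk1 j = Mark.arrow → w.mk2 j = Mark.tail →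
      G.Anc (w.vert l) (w.vert (j + 1)) → False := by
    intro l hl0 hlN hlnc j
    induction j using Nat.strong_induction_on with
    | _ j ihj =>
    intro hjl hj1 hj2 hanc
    have hv := w.valid j (by omega)
    rw [hj1, hj2] at hv
    have hanc' : G.Anc (w.vert l) (w.vert j) := hanc.tail hv
    rcases Nat.eq_zero_or_pos j with hj0 | hj0
    · subst hj0
      rw [h0] at hanc'
      exact hblock l hlnc hl0 hlN (Or.inl hanc')
    · rcases mark_cases (w.mk2 (j - 1)) with hm | hm
      · have hpat := (hopen.2.2 j hj0 (by omega)).2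
        have hm1 : w.mk1 (j - 1) = Mark.arrow := by
          rcases mark_cases (w.mk1 (j - 1)) with h' | h'
          · exact absurd ⟨h', hm, hj1⟩ hpat
          · exact h'
        refine ihj (j - 1) (by omega) (by omega) hm1 hm ?_
        rw [show j - 1 + 1 = j by omega]
        exact hanc'
      · exact hblock l hlnc hl0 hlN (hancgood _ j ⟨hj0, by omega, hm, hj1⟩ hanc')
  have hasc : ∀ l, 0 < l → l < N → ¬ w.IsCollider l →
      ∀ d j, d = N - j → l ≤ j → j < N → w.mk1 j = Mark.tail → w.mk2 j = Mark.arrow →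
      G.Anc (w.vert l) (w.vert j) → False := by
    intro l hl0 hlN hlnc d
    induction d using Nat.strong_induction_on with
    | _ d ihd =>
    intro j hdj hlj hjN hj1 hj2 hanc
    have hv := w.valid j hjN
    rw [hj1, hj2] at hv
    have hanc' : G.Anc (w.vert l) (w.vert (j + 1)) := hanc.tail hv
    by_cases hje : j + 1 = N
    · rw [hje, hnb] at hanc'
      exact hblock l hlnc hl0 hlN (Or.inr (Or.inl hanc'))
    · rcases mark_cases (w.mk1 (j + 1)) with hm | hm
      · have hpat := (hopen.2.2 (j + 1) (by omega) (by omega)).1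
        have hm2 : w.mk2 (j + 1) = Mark.arrow := by
          rcases mark_cases (w.mk2 (j + 1)) with h' | h'
          · refine absurd ⟨?_, hm, h'⟩ hpat
            rw [show j + 1 - 1 = j by omega]
            exact hj2
          · exact h'
        exact ihd (N - (j + 1)) (by omega) (j + 1) rfl (by omega) (by omega) hm hm2 hanc'
      · refine hblock l hlnc hl0 hlN (hancgood _ (j + 1) ⟨by omega, by omega, ?_, hm⟩ hanc')
        rw [show j + 1 - 1 = j by omega]
        exact hj2
  have hnound : ∀ k, k < N → w.mk1 k = Mark.tail → w.mk2 k = Mark.tail → False := by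
    intro k
    induction k using Nat.strong_induction_on with
    | _ k ihk =>
    intro hkN h1 h2
    have hv := w.valid k hkN
    rw [h1, h2] at hv
    rcases Nat.eq_zero_or_pos k with hk0 | hk0
    · subst hk0
      rw [h0] at hv
      have hnc1 : ¬ w.IsCollider 1 := by
        rintro ⟨-, -, hcc, -⟩
        have hcc' : w.mk2 0 = Mark.arrow := hcc
        rw [h2] at hcc'
        exact Mark.noConfusion hcc'
      exact hblock 1 hnc1 (by omega) (by omega)
        (Or.inr (Or.inr (Or.inl ⟨1, uch_single (G.undir_symm _ _ hv)⟩)))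
    · have hpat := (hopen.2.2 k hk0 hkN).1
      have hm2 : w.mk2 (k - 1) = Mark.tail := by
        rcases mark_cases (w.mk2 (k - 1)) with h' | h'
        · exact h'
        · exact absurd ⟨h', h1, h2⟩ hpat
      rcases mark_cases (w.mk1 (k - 1)) with hm' | hm'
      · exact ihk (k - 1) (by omega) (by omega) hm' hm2
      · have hknc : ¬ w.IsCollider k := by
          rintro ⟨-, -, hcc, -⟩
          rw [hm2] at hcc
          exact Mark.noConfusion hcc
        refine hdesc k hk0 hkN hknc (k - 1) (by omega) hm' hm2 ?_
        rw [show k - 1 + 1 = k by omega]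
        exact Relation.ReflTransGen.refl
  have hcol : ∀ k, 0 < k → k < N → w.IsCollider k := by
    intro k hk0 hkN
    by_contra hnc
    rcases mark_cases (w.mk1 k) with h1 | h1
    · rcases mark_cases (w.mk2 k) with h2 | h2
      · exact hnound k hkN h1 h2
      · exact hasc k hk0 hkN hnc (N - k) k rfl le_rfl hkN h1 h2 Relation.ReflTransGen.refl
    · rcases mark_cases (w.mk2 (k - 1)) with h2 | h2
      · rcases mark_cases (w.mk1 (k - 1)) with h3 | h3
        · exact hnound (k - 1) (by omega) h3 h2
        · refine hdesc k hk0 hkN hnc (k - 1) (by omega) h3 h2 ?_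
          rw [show k - 1 + 1 = k by omega]
          exact Relation.ReflTransGen.refl
      · exact hnc ⟨hk0, hkN, h2, h1⟩
  have hfirst : G.ArrowAt (w.vert 1) (w.vert 0) := by
    have hm0 : w.mk2 0 = Mark.arrow := (hcol 1 (by omega) (by omega)).2.2.1
    have hv := w.valid 0 (by omega)
    rcases mark_cases (w.mk1 0) with h' | h'
    · rw [h', hm0] at hv
      exact Or.inl hv
    · rw [h', hm0] at hv
      exact Or.inr (G.bidir_symm _ _ hv)
  have hlastA : G.ArrowAt (w.vert (N - 1)) (w.vert N) := by
    have hm : w.mk1 (N - 1) = Mark.arrow := (hcol (N - 1) (by omega) (by omega)).2.2.2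
    have hv := w.valid (N - 1) (by omega)
    rw [show N - 1 + 1 = N by omega] at hv
    rcases mark_cases (w.mk2 (N - 1)) with h' | h'
    · rw [hm, h'] at hv
      exact Or.inl hv
    · rw [hm, h'] at hv
      exact Or.inr hv
  have hmids : ∀ i, 1 ≤ i → i ≤ N - 2 → G.bidir (w.vert i) (w.vert (i + 1)) := by
    intro i hi1 hi2
    have hv := w.valid i (by omega)
    have hA : w.mk1 i = Mark.arrow := (hcol i (by omega) (by omega)).2.2.2
    have hB : w.mk2 i = Mark.arrow := by
      have h' := (hcol (i + 1) (by omega) (by omega)).2.2.1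
      rwa [show i + 1 - 1 = i by omega] at h'
    rw [hA, hB] at hv
    exact hv
  have hfacts : ∀ i, 1 ≤ i → i ≤ N - 1 →
      G.Anc (w.vert i) a ∨ G.Anc (w.vert i) b ∨
      (∃ u m, G.undir (w.vert i) u ∧ G.UCh m u a) ∨
      (∃ u m, G.undir (w.vert i) u ∧ G.UCh m u b) := by
    intro i hi1 hi2
    have hg : G.ZGood a b (w.vert i) :=
      zgood_of_ancS hG (hopen.2.1 i (hcol i (by omega) (by omega)))
    rcases hg with h | h | ⟨m, h⟩ | ⟨m, h⟩
    · exact Or.inl h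
    · exact Or.inr (Or.inl h)
    · rcases Nat.eq_zero_or_pos m with hm0 | hm0
      · subst hm0
        exact absurd (uch_zero h) (hint i (by omega) (by omega)).1
      · obtain ⟨m', rfl⟩ : ∃ k, m = k + 1 := ⟨m - 1, by omega⟩
        obtain ⟨u, hu, hch⟩ := uch_head h
        exact Or.inr (Or.inr (Or.inl ⟨u, m', hu, hch⟩))
    · rcases Nat.eq_zero_or_pos m with hm0 | hm0
      · subst hm0
        exact absurd (uch_zero h) (hint i (by omega) (by omega)).2
      · obtain ⟨m', rfl⟩ : ∃ k, m = k + 1 := ⟨m - 1, by omega⟩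
        obtain ⟨u, hu, hch⟩ := uch_head h
        exact Or.inr (Or.inr (Or.inr ⟨u, m', hu, hch⟩))
  obtain ⟨n', ⟨S⟩⟩ := spine_of_raw hab N hN2 w.vert h0 hnb
    (fun i h1 h2 => hint i (by omega) (by omega)) hfirst hlastA hmids hfacts
  exact spine_false hG n' a b hnadj S

end MixedGraph


namespace MixedGraph

variable {G : MixedGraph V}

lemma arrowAt_adj {x y : V} (h : G.ArrowAt x y) : G.Adj x y := by
  rcases h with h | h
  · exact Or.inr (Or.inl h)
  · exact Or.inr (Or.inr (Or.inl h))

lemma adj_irrefl (hG : G.IsSigmaMAG) {x : V} (h : G.Adj x x) : False := by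
  rcases h with h | h | h | h
  exacts [(hG.no_self x).1 h, (hG.no_self x).1 h, (hG.no_self x).2.1 h, (hG.no_self x).2.2 h]

/-- The one-edge walk. -/
def walk1 (G : MixedGraph V) (a b : V) (m1 m2 : Mark) (e : G.EdgeMk a b m1 m2) :
    G.Walk 1 where
  vert := fun n => match n with | 0 => a | _ => b
  mk1 := fun _ => m1
  mk2 := fun _ => m2
  valid := fun i hi => by
    match i, hi with
    | 0, _ => exact e

lemma walk1_mopen {Z : Set V} {a b : V} {m1 m2 : Mark} {e : G.EdgeMk a b m1 m2}
    (ha : a ∉ Z) (hb : b ∉ Z) : (walk1 G a b m1 m2 e).MOpen Z := by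
  refine ⟨?_, ?_, ?_⟩
  · intro k hk _
    match k, hk with
    | 0, _ => exact ha
    | 1, _ => exact hb
  · intro k hk
    exfalso
    have h1 := hk.1
    have h2 := hk.2.1
    omega
  · intro k h1 h2
    omega

/-- The two-edge walk. -/
def walk2 (G : MixedGraph V) (a b c : V) (m1 m2 m3 m4 : Mark)
    (e1 : G.EdgeMk a b m1 m2) (e2 : G.EdgeMk b c m3 m4) : G.Walk 2 where
  vert := fun n => match n with | 0 => a | 1 => b | _ => c
  mk1 := fun n => match n with | 0 => m1 | _ => m3
  mk2 := fun n => match n with | 0 => m2 | _ => m4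
  valid := fun i hi => by
    match i, hi with
    | 0, _ => exact e1
    | 1, _ => exact e2

lemma walk2_mopen_col {Z : Set V} {a b c : V} {m1 m4 : Mark}
    {e1 : G.EdgeMk a b m1 Mark.arrow} {e2 : G.EdgeMk b c Mark.arrow m4}
    (ha : a ∉ Z) (hc : c ∉ Z) (hb : G.AncS b Z) :
    (walk2 G a b c m1 Mark.arrow Mark.arrow m4 e1 e2).MOpen Z := by
  refine ⟨?_, ?_, ?_⟩
  · intro k hk hnc
    match k, hk with
    | 0, _ => exact ha
    | 1, _ => exact absurd ⟨by omega, by omega, rfl, rfl⟩ hnc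
    | 2, _ => exact hc
  · intro k hk
    obtain ⟨h1, h2, -, -⟩ := hk
    have hk1 : k = 1 := by omega
    subst hk1
    exact hb
  · intro k h1 h2
    have hk1 : k = 1 := by omega
    subst hk1
    constructor
    · rintro ⟨-, hx, -⟩
      exact Mark.noConfusion hx
    · rintro ⟨-, hx, -⟩
      exact Mark.noConfusion hx

lemma walk2_mopen_noncol {Z : Set V} {a b c : V} {m1 m3 m4 : Mark}
    {e1 : G.EdgeMk a b m1 Mark.tail} {e2 : G.EdgeMk b c m3 m4}
    (ha : a ∉ Z) (hc : c ∉ Z) (hb : b ∉ Z)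
    (hpat : ¬ (m1 = Mark.tail ∧ m3 = Mark.arrow)) :
    (walk2 G a b c m1 Mark.tail m3 m4 e1 e2).MOpen Z := by
  refine ⟨?_, ?_, ?_⟩
  · intro k hk _
    match k, hk with
    | 0, _ => exact ha
    | 1, _ => exact hb
    | 2, _ => exact hc
  · intro k hk
    exfalso
    obtain ⟨h1, h2, h3, -⟩ := hk
    have hk1 : k = 1 := by omega
    subst hk1
    exact Mark.noConfusion h3
  · intro k h1 h2
    have hk1 : k = 1 := by omega
    subst hk1
    constructor
    · rintro ⟨hx, -, -⟩
      exact Mark.noConfusion hx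
    · rintro ⟨hx, -, hy⟩
      exact hpat ⟨hx, hy⟩

end MixedGraph

open MixedGraph in
/-- Adjacency transfers between m-Markov equivalent σ-MAGs. -/
lemma adj_transfer {V : Type*} {H₁ H₂ : MixedGraph V} (h₁ : H₁.IsSigmaMAG)
    (h₂ : H₂.IsSigmaMAG) (heq : MMarkovEquiv H₁ H₂) {a b : V} (hadj : H₁.Adj a b) :
    H₂.Adj a b := by
  by_contra hnadj
  have hab : a ≠ b := by
    intro h
    exact adj_irrefl h₁ (h ▸ hadj)
  have hsep : H₁.MSep {a} {b} (H₂.ZSet a b) :=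
    (heq _ _ _).mpr (msep_of_not_adj h₂ hab hnadj)
  have haZ : a ∉ H₂.ZSet a b := fun h => h.1 rfl
  have hbZ : b ∉ H₂.ZSet a b := fun h => h.2.1 rfl
  obtain ⟨m1, m2, e⟩ : ∃ m1 m2, H₁.EdgeMk a b m1 m2 := by
    rcases hadj with h | h | h | h
    exacts [⟨Mark.tail, Mark.arrow, h⟩, ⟨Mark.arrow, Mark.tail, h⟩,
      ⟨Mark.arrow, Mark.arrow, h⟩, ⟨Mark.tail, Mark.tail, h⟩]
  exact hsep 1 (walk1 H₁ a b m1 m2 e) rfl rfl (walk1_mopen haZ hbZ)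

open MixedGraph in
/-- One arrowhead of an unshielded collider transfers. -/
lemma uc_arrow_transfer {V : Type*} {H₁ H₂ : MixedGraph V} (h₁ : H₁.IsSigmaMAG)
    (h₂ : H₂.IsSigmaMAG) (heq : MMarkovEquiv H₁ H₂)
    (hadjiff : ∀ x y, H₁.Adj x y ↔ H₂.Adj x y)
    {a b c : V} (huc : H₁.UnshieldedCollider a b c) : H₂.ArrowAt b a := by
  obtain ⟨hac, hnadj1, hba, hbc⟩ := huc
  have hnadj2 : ¬ H₂.Adj a c := fun h => hnadj1 ((hadjiff a c).mpr h)
  have hsep1 : H₁.MSep {a} {c} (H₁.ZSet a c) := msep_of_not_adj h₁ hac hnadj1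
  have hsep2 : H₂.MSep {a} {c} (H₁.ZSet a c) := (heq _ _ _).mp hsep1
  have haZ : a ∉ H₁.ZSet a c := fun h => h.1 rfl
  have hcZ : c ∉ H₁.ZSet a c := fun h => h.2.1 rfl
  obtain ⟨m1, e1⟩ : ∃ m1, H₁.EdgeMk a b m1 Mark.arrow := by
    rcases hba with h | h
    · exact ⟨Mark.tail, h⟩
    · exact ⟨Mark.arrow, H₁.bidir_symm _ _ h⟩
  obtain ⟨m4, e2⟩ : ∃ m4, H₁.EdgeMk b c Mark.arrow m4 := by
    rcases hbc with h | h
    · exact ⟨Mark.tail, h⟩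
    · exact ⟨Mark.arrow, h⟩
  have hbZ : b ∉ H₁.ZSet a c := by
    intro hbZ
    exact hsep1 2 (walk2 H₁ a b c m1 Mark.arrow Mark.arrow m4 e1 e2) rfl rfl
      (walk2_mopen_col haZ hcZ ⟨b, hbZ, Relation.ReflTransGen.refl⟩)
  by_contra hnarrow
  -- the edge between a and b in H₂ has a tail at b
  have hadj2ab : H₂.Adj a b := (hadjiff a b).mp (adj_symm (arrowAt_adj hba))
  obtain ⟨m1', e1'⟩ : ∃ m1', H₂.EdgeMk a b m1' Mark.tail := by
    rcases hadj2ab with h | h | h | h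
    · exact absurd (Or.inl h) hnarrow
    · exact ⟨Mark.arrow, h⟩
    · exact absurd (Or.inr (H₂.bidir_symm _ _ h)) hnarrow
    · exact ⟨Mark.tail, h⟩
  have hadj2bc : H₂.Adj b c := (hadjiff b c).mp (arrowAt_adj hbc)
  obtain ⟨m3', m4', e2'⟩ : ∃ m3' m4', H₂.EdgeMk b c m3' m4' := by
    rcases hadj2bc with h | h | h | h
    exacts [⟨Mark.tail, Mark.arrow, h⟩, ⟨Mark.arrow, Mark.tail, h⟩,
      ⟨Mark.arrow, Mark.arrow, h⟩, ⟨Mark.tail, Mark.tail, h⟩]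
  refine hsep2 2 (walk2 H₂ a b c m1' Mark.tail m3' m4' e1' e2') rfl rfl
    (walk2_mopen_noncol haZ hcZ hbZ ?_)
  rintro ⟨hm1, hm3⟩
  -- then the edge a—b is undirected in H₂ and b has an arrowhead from c : σ₁ forces Adj a c
  subst hm1
  have hund : H₂.undir a b := e1'
  have harr : H₂.ArrowAt b c := by
    subst hm3
    rcases mark_cases m4' with h | h <;> subst h
    · exact Or.inl e2'
    · exact Or.inr e2'
  exact hnadj2 (adj_symm (h₂.sigma_complete₁ c b a harr (H₂.undir_symm _ _ hund)))


namespace MixedGraph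

variable {G : MixedGraph V}

/-- On a discriminating path, the nodes strictly between the endpoints and the
discriminated node all belong to any separating set for the endpoints. -/
lemma disc_mem (hG : G.IsSigmaMAG) {n : ℕ} {w : G.Walk n} (hd : w.IsDiscriminating)
    {Z : Set V} (hsep : G.MSep {w.vert 0} {w.vert n} Z)
    (ha : w.vert 0 ∉ Z) (hc : w.vert n ∉ Z) :
    ∀ k, 0 < k → k < n - 1 → w.vert k ∈ Z := by
  obtain ⟨hn3, hpath, hnadj, hcol⟩ := hd
  intro k
  induction k using Nat.strong_induction_on with
  | _ k ihk =>
  intro hk0 hkn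
  by_contra hkZ
  have hdir : G.dir (w.vert k) (w.vert n) := (hcol k hk0 hkn).2
  set w' : G.Walk (k + 1) := {
    vert := fun j => if j ≤ k then w.vert j else w.vert n
    mk1 := fun j => if j < k then w.mk1 j else Mark.tail
    mk2 := fun j => if j < k then w.mk2 j else Mark.arrow
    valid := by
      intro j hj
      by_cases h : j < k
      · rw [if_pos (by omega : j ≤ k), if_pos (by omega : j + 1 ≤ k), if_pos h, if_pos h]
        exact w.valid j (by omega)
      · have hjk : j = k := by omega
        rw [if_pos (by omega : j ≤ k), if_neg (by omega : ¬ j + 1 ≤ k), if_neg h, if_neg h,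
          hjk]
        exact hdir } with hw'
  have hv0 : ∀ j, j ≤ k → w'.vert j = w.vert j := by
    intro j hj
    show (if j ≤ k then w.vert j else w.vert n) = w.vert j
    rw [if_pos hj]
  have hvn : w'.vert (k + 1) = w.vert n := by
    show (if k + 1 ≤ k then w.vert (k + 1) else w.vert n) = w.vert n
    rw [if_neg (by omega : ¬ k + 1 ≤ k)]
  have hma : ∀ j, j < k → w'.mk1 j = w.mk1 j := by
    intro j hj
    show (if j < k then w.mk1 j else Mark.tail) = w.mk1 j
    rw [if_pos hj]
  have hmak : w'.mk1 k = Mark.tail := by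
    show (if k < k then w.mk1 k else Mark.tail) = Mark.tail
    rw [if_neg (by omega : ¬ k < k)]
  have hmb : ∀ j, j < k → w'.mk2 j = w.mk2 j := by
    intro j hj
    show (if j < k then w.mk2 j else Mark.arrow) = w.mk2 j
    rw [if_pos hj]
  have hmbk : w'.mk2 k = Mark.arrow := by
    show (if k < k then w.mk2 k else Mark.arrow) = Mark.arrow
    rw [if_neg (by omega : ¬ k < k)]
  refine hsep (k + 1) w' (by rw [hv0 0 (by omega)]; rfl) (by rw [hvn]; rfl) ⟨?_, ?_, ?_⟩
  · intro j hj hnc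
    by_cases h0 : j = 0
    · subst h0
      rw [hv0 0 (by omega)]
      exact ha
    · by_cases hl : j = k + 1
      · subst hl
        rw [hvn]
        exact hc
      · by_cases hjk : j = k
        · subst hjk
          rw [hv0 j le_rfl]
          exact hkZ
        · -- 0 < j < k : j is a collider on w'
          exfalso
          have hcj := (hcol j (by omega) (by omega)).1
          refine hnc ⟨by omega, by omega, ?_, ?_⟩
          · rw [hmb (j - 1) (by omega)]
            exact hcj.2.2.1
          · rw [hma j (by omega)]
            exact hcj.2.2.2
  · intro j hjc
    obtain ⟨hj0, hjk, hj2, hj1⟩ := hjc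
    by_cases hjk' : j = k
    · exfalso
      rw [hjk', hmak] at hj1
      exact Mark.noConfusion hj1
    · refine ⟨w'.vert j, ?_, Relation.ReflTransGen.refl⟩
      rw [hv0 j (by omega)]
      exact ihk j (by omega) hj0 (by omega)
  · intro j hj0 hjk
    by_cases hjk' : j = k
    · subst hjk'
      constructor
      · rintro ⟨-, -, hx⟩
        rw [hmbk] at hx
        exact Mark.noConfusion hx
      · rintro ⟨-, hx, -⟩
        rw [hmb (j - 1) (by omega)] at hx
        have := (hcol j hj0 hkn).1.2.2.1
        rw [this] at hx
        exact Mark.noConfusion hx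
    · have hcj := (hcol j (by omega) (by omega)).1
      constructor
      · rintro ⟨-, hx, -⟩
        rw [hma j (by omega)] at hx
        rw [hcj.2.2.2] at hx
        exact Mark.noConfusion hx
      · rintro ⟨-, hx, -⟩
        rw [hmb (j - 1) (by omega)] at hx
        rw [hcj.2.2.1] at hx
        exact Mark.noConfusion hx

end MixedGraph

open MixedGraph in
/-- The collider status of the discriminated node transfers. -/
lemma disc_transfer {V : Type*} {H₁ H₂ : MixedGraph V} (h₁ : H₁.IsSigmaMAG)
    (h₂ : H₂.IsSigmaMAG) (heq : MMarkovEquiv H₁ H₂) {n : ℕ} {w₁ : H₁.Walk n}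
    {w₂ : H₂.Walk n} (hv : ∀ k, w₂.vert k = w₁.vert k)
    (hd₁ : w₁.IsDiscriminating) (hd₂ : w₂.IsDiscriminating)
    (hcol1 : w₁.IsCollider (n - 1)) : w₂.IsCollider (n - 1) := by
  obtain ⟨hn3, hpath, hnadj, hk1⟩ := hd₁
  obtain ⟨-, hpath2, hnadj2, hk2⟩ := hd₂
  set a := w₁.vert 0 with hadef
  set c := w₁.vert n with hcdef
  have hac : a ≠ c := by
    intro h
    have := hpath 0 n (by omega) le_rfl h
    omega
  set Z := H₁.ZSet a c with hZ
  have hsep1 : H₁.MSep {a} {c} Z := msep_of_not_adj h₁ hac hnadj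
  have hsep2 : H₂.MSep {a} {c} Z := (heq _ _ _).mp hsep1
  have haZ : a ∉ Z := fun h => h.1 rfl
  have hcZ : c ∉ Z := fun h => h.2.1 rfl
  have hmem : ∀ k, 0 < k → k < n - 1 → w₁.vert k ∈ Z :=
    disc_mem h₁ ⟨hn3, hpath, hnadj, hk1⟩ hsep1 haZ hcZ
  have hnAncS : ¬ H₁.AncS (w₁.vert (n - 1)) Z := by
    intro hAncS
    refine hsep1 n w₁ rfl rfl ⟨?_, ?_, ?_⟩
    · intro k hk hnc
      by_cases h0 : k = 0
      · subst h0; exact haZ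
      · by_cases hn : k = n
        · subst hn; exact hcZ
        · by_cases hl : k = n - 1
          · subst hl; exact absurd hcol1 hnc
          · exact absurd (hk1 k (by omega) (by omega)).1 hnc
    · intro k hkc
      by_cases hl : k = n - 1
      · subst hl; exact hAncS
      · have h0 : 0 < k := hkc.1
        have hn : k < n := hkc.2.1
        exact ⟨w₁.vert k, hmem k h0 (by omega), Relation.ReflTransGen.refl⟩
    · intro k h0 hn
      have hka : w₁.mk1 k = Mark.arrow := by
        by_cases hl : k = n - 1
        · subst hl; exact hcol1.2.2.2
        · exact (hk1 k h0 (by omega)).1.2.2.2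
      have hkb : w₁.mk2 (k - 1) = Mark.arrow := by
        by_cases hl : k = n - 1
        · subst hl; exact hcol1.2.2.1
        · exact (hk1 k h0 (by omega)).1.2.2.1
      constructor
      · rintro ⟨-, hx, -⟩
        rw [hka] at hx
        exact Mark.noConfusion hx
      · rintro ⟨-, hx, -⟩
        rw [hkb] at hx
        exact Mark.noConfusion hx
  have hbZ : w₁.vert (n - 1) ∉ Z := fun h => hnAncS ⟨_, h, Relation.ReflTransGen.refl⟩
  by_contra hnc2
  refine hsep2 n w₂ (by show w₂.vert 0 = a; rw [hv 0]) (by show w₂.vert n = c; rw [hv n])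
    ⟨?_, ?_, ?_⟩
  · intro k hk hnc
    by_cases h0 : k = 0
    · subst h0; rw [hv 0]; exact haZ
    · by_cases hn : k = n
      · rw [hn, hv n]; exact hcZ
      · by_cases hl : k = n - 1
        · subst hl; rw [hv (n - 1)]; exact hbZ
        · exact absurd (hk2 k (by omega) (by omega)).1 hnc
  · intro k hkc
    by_cases hl : k = n - 1
    · subst hl; exact absurd hkc hnc2
    · have h0 : 0 < k := hkc.1
      have hn : k < n := hkc.2.1
      refine ⟨w₂.vert k, ?_, Relation.ReflTransGen.refl⟩
      rw [hv k]
      exact hmem k h0 (by omega)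
  · intro k h0 hn
    by_cases hl : k = n - 1
    · subst hl
      constructor
      · rintro ⟨hx1, hx2, hx3⟩
        have hc2 : w₂.IsCollider (n - 2) := (hk2 (n - 2) (by omega) (by omega)).1
        have hdir : H₂.dir (w₂.vert (n - 2)) (w₂.vert n) :=
          (hk2 (n - 2) (by omega) (by omega)).2
        have hund : H₂.undir (w₂.vert (n - 1)) (w₂.vert n) := by
          have hval := w₂.valid (n - 1) (by omega)
          rw [show n - 1 + 1 = n by omega] at hval
          rw [hx2, hx3] at hval
          exact hval
        have hbid : H₂.bidir (w₂.vert (n - 2)) (w₂.vert (n - 1)) := by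
          have hval := w₂.valid (n - 2) (by omega)
          rw [show n - 2 + 1 = n - 1 by omega] at hval
          rw [show n - 1 - 1 = n - 2 by omega] at hx1
          rw [hc2.2.2.2, hx1] at hval
          exact hval
        exact no_arrow_of_rch h₂
          (rch_two (Or.inl hdir) (Or.inr (H₂.undir_symm _ _ hund)))
          (Or.inr hbid)
      · rintro ⟨hx1, -, -⟩
        rw [show n - 1 - 1 = n - 2 by omega] at hx1
        rw [(hk2 (n - 2) (by omega) (by omega)).1.2.2.2] at hx1
        exact Mark.noConfusion hx1
    · have hcj := (hk2 k (by omega) (by omega)).1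
      constructor
      · rintro ⟨-, hx, -⟩
        rw [hcj.2.2.2] at hx
        exact Mark.noConfusion hx
      · rintro ⟨-, hx, -⟩
        rw [hcj.2.2.1] at hx
        exact Mark.noConfusion hx


/-- If two σ-MAGs `H₁`, `H₂` on the same node set are m-Markov equivalent, then they
satisfy Condition 1 (same adjacencies, same unshielded colliders, and agreement of the
collider status of the discriminated node on corresponding discriminating paths). -/

theorem mMarkovEquiv_implies_condition1 {V : Type*} (H₁ H₂ : MixedGraph V)
    (h₁ : H₁.IsSigmaMAG) (h₂ : H₂.IsSigmaMAG) (heq : MMarkovEquiv H₁ H₂) :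
    Condition1 H₁ H₂ := by
  have heq' : MMarkovEquiv H₂ H₁ := fun X Y Z => (heq X Y Z).symm
  have hadjiff : ∀ x y, H₁.Adj x y ↔ H₂.Adj x y :=
    fun x y => ⟨adj_transfer h₁ h₂ heq, adj_transfer h₂ h₁ heq'⟩
  have hadjiff' : ∀ x y, H₂.Adj x y ↔ H₁.Adj x y := fun x y => (hadjiff x y).symm
  refine ⟨hadjiff, ?_, ?_⟩
  · intro a b c
    constructor
    · intro h
      exact ⟨h.1, fun hx => h.2.1 ((hadjiff a c).mpr hx),
        uc_arrow_transfer h₁ h₂ heq hadjiff h,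
        uc_arrow_transfer h₁ h₂ heq hadjiff
          ⟨h.1.symm, fun hx => h.2.1 (MixedGraph.adj_symm hx), h.2.2.2, h.2.2.1⟩⟩
    · intro h
      exact ⟨h.1, fun hx => h.2.1 ((hadjiff' a c).mpr hx),
        uc_arrow_transfer h₂ h₁ heq' hadjiff' h,
        uc_arrow_transfer h₂ h₁ heq' hadjiff'
          ⟨h.1.symm, fun hx => h.2.1 (MixedGraph.adj_symm hx), h.2.2.2, h.2.2.1⟩⟩
  · intro n w₁ w₂ hv hd₁ hd₂
    exact ⟨disc_transfer h₁ h₂ heq hv hd₁ hd₂,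
      disc_transfer h₂ h₁ heq' (fun k => (hv k).symm) hd₂ hd₁⟩
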